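/- arXiv:2601.14642 — 8 statements merged into one kernel-verified Lean document; each statement's English description precedes it below -/
import Mathlib

section
/- Let α be a type, Inst ⊆ α a set, and let ib and ob be binary relations on α that are both irreflexive and transitive and satisfy (ob;[Inst]) ⊆ ib and ([Inst];ib) ⊆ ob. Then there exist binary relations IB and OB on α with ib ⊆ IB and ob ⊆ OB such that: IB and OB are irreflexive and transitive, IB and OB are total (for all a ≠ b, the relation holds of (a,b) or of (b,a)), (OB;[Inst]) ⊆ IB, and ([Inst];IB) ⊆ OB. (Theorem: the 'issued-before' and 'observed-before' relations of a consistent RDMA execution can be jointly extended to total strict orders preserving their closure laws with respect to the instantaneous events.) -/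
/-- Any strict order (irreflexive and transitive) extends to a strict total order. -/
lemma exists_strict_linear_ext {α : Type*} (r : α → α → Prop)
    (hirr : Irreflexive r) (htr : Transitive r) :
    ∃ s : α → α → Prop, (∀ a b, r a b → s a b) ∧ Irreflexive s ∧ Transitive s ∧
      (∀ a b, a ≠ b → s a b ∨ s b a) := by
  let rr : α → α → Prop := fun a b => r a b ∨ a = b
  haveI : IsPartialOrder α rr :=
    { refl := fun a => Or.inr rfl
      trans := by
        rintro a b c (hab | rfl) (hbc | rfl)
        · exact Or.inl (htr hab hbc)
        · exact Or.inl hab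
        · exact Or.inl hbc
        · exact Or.inr rfl
      antisymm := by
        rintro a b (hab | rfl) (hba | h)
        · exact absurd (htr hab hba) (hirr a)
        · exact h.symm
        · rfl
        · rfl }
  obtain ⟨s, hlin, hsub⟩ := extend_partialOrder rr
  refine ⟨fun a b => s a b ∧ a ≠ b, ?_, ?_, ?_, ?_⟩
  · intro a b hr
    refine ⟨hsub _ _ (Or.inl hr), ?_⟩
    rintro rfl; exact hirr a hr
  · rintro a ⟨-, h⟩; exact h rfl
  · rintro a b c ⟨hab, hab'⟩ ⟨hbc, hbc'⟩
    refine ⟨hlin.trans _ _ _ hab hbc, ?_⟩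
    rintro rfl
    exact hab' (hlin.antisymm _ _ hab hbc)
  · intro a b hne
    rcases hlin.total a b with h | h
    · exact Or.inl ⟨h, hne⟩
    · exact Or.inr ⟨h, hne.symm⟩

/-- Theorem `extend-ibob`: the issued-before (`ib`) and observed-before (`ob`)
relations of a consistent RDMA execution can be jointly extended to total strict
orders `IB` and `OB` preserving the closure laws with respect to the set `Inst`
of instantaneous events. -/
theorem extend_ibob {α : Type*} (Inst : Set α) (ib ob : α → α → Prop)
    (hib_irr : Irreflexive ib) (hib_trans : Transitive ib)
    (hob_irr : Irreflexive ob) (hob_trans : Transitive ob)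
    (h_ob_inst : ∀ a b, ob a b → b ∈ Inst → ib a b)
    (h_inst_ib : ∀ a b, a ∈ Inst → ib a b → ob a b) :
    ∃ IB OB : α → α → Prop,
      (∀ a b, ib a b → IB a b) ∧
      (∀ a b, ob a b → OB a b) ∧
      Irreflexive IB ∧ Transitive IB ∧
      Irreflexive OB ∧ Transitive OB ∧
      (∀ a b, a ≠ b → IB a b ∨ IB b a) ∧
      (∀ a b, a ≠ b → OB a b ∨ OB b a) ∧
      (∀ a b, OB a b → b ∈ Inst → IB a b) ∧
      (∀ a b, a ∈ Inst → IB a b → OB a b) := by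
  obtain ⟨IB, hIBsub, hIBirr, hIBtr, hIBtot⟩ := exists_strict_linear_ext ib hib_irr hib_trans
  -- S = ob ∪ ([Inst] ; IB)
  set S : α → α → Prop := fun a b => ob a b ∨ (a ∈ Inst ∧ IB a b) with hS
  -- shape invariant for S-paths
  have lemB : ∀ x y, Relation.TransGen S x y →
      ob x y ∨ IB x y ∨ ∃ t, IB x t ∧ ob t y := by
    intro x y h
    induction h with
    | single h =>
      rcases h with h | ⟨_, h⟩
      · exact Or.inl h
      · exact Or.inr (Or.inl h)
    | tail _ h ih =>
      rename_i b c _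
      rcases h with hbc | ⟨hbI, hbc⟩
      · rcases ih with h | h | ⟨t, h1, h2⟩
        · exact Or.inl (hob_trans h hbc)
        · exact Or.inr (Or.inr ⟨b, h, hbc⟩)
        · exact Or.inr (Or.inr ⟨t, h1, hob_trans h2 hbc⟩)
      · rcases ih with h | h | ⟨t, h1, h2⟩
        · exact Or.inr (Or.inl (hIBtr (hIBsub _ _ (h_ob_inst _ _ h hbI)) hbc))
        · exact Or.inr (Or.inl (hIBtr h hbc))
        · exact Or.inr (Or.inl (hIBtr (hIBtr h1 (hIBsub _ _ (h_ob_inst _ _ h2 hbI))) hbc))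
  -- any S-path is a pure ob-path, or passes through an Inst element heading the rest
  have lemA : ∀ x y, Relation.TransGen S x y →
      ob x y ∨ ∃ a, a ∈ Inst ∧ Relation.TransGen S a y ∧ (x = a ∨ ob x a) := by
    intro x y h
    induction h with
    | single h =>
      rcases h with h | ⟨haI, hIB⟩
      · exact Or.inl h
      · exact Or.inr ⟨x, haI, Relation.TransGen.single (Or.inr ⟨haI, hIB⟩), Or.inl rfl⟩
    | tail _ h ih =>
      rename_i b c _
      rcases h with hbc | ⟨hbI, hbc⟩
      · rcases ih with h | ⟨a, haI, hpath, hxa⟩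
        · exact Or.inl (hob_trans h hbc)
        · exact Or.inr ⟨a, haI, hpath.tail (Or.inl hbc), hxa⟩
      · rcases ih with h | ⟨a, haI, hpath, hxa⟩
        · exact Or.inr ⟨b, hbI, Relation.TransGen.single (Or.inr ⟨hbI, hbc⟩), Or.inr h⟩
        · exact Or.inr ⟨a, haI, hpath.tail (Or.inr ⟨hbI, hbc⟩), hxa⟩
  have hSirr : Irreflexive (Relation.TransGen S) := by
    intro x h
    rcases lemA x x h with h' | ⟨a, haI, hpath, hxa⟩
    · exact hob_irr x h'
    · have haa : Relation.TransGen S a a := by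
        rcases hxa with rfl | hxa
        · exact hpath
        · exact hpath.tail (Or.inl hxa)
      rcases lemB a a haa with h' | h' | ⟨t, h1, h2⟩
      · exact hob_irr a h'
      · exact hIBirr a h'
      · exact hIBirr a (hIBtr h1 (hIBsub _ _ (h_ob_inst _ _ h2 haI)))
  obtain ⟨OB, hOBsub, hOBirr, hOBtr, hOBtot⟩ :=
    exists_strict_linear_ext (Relation.TransGen S) hSirr
      (fun _ _ _ h1 h2 => h1.trans h2)
  have hOBasym : ∀ a b, OB a b → OB b a → False := fun a b h1 h2 =>
    hOBirr a (hOBtr h1 h2)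
  refine ⟨IB, OB, hIBsub, ?_, hIBirr, hIBtr, hOBirr, hOBtr, hIBtot, hOBtot, ?_, ?_⟩
  · intro a b h
    exact hOBsub _ _ (Relation.TransGen.single (Or.inl h))
  · intro a b hOB hbI
    by_contra hnot
    have hne : a ≠ b := fun h => hOBirr a (h ▸ hOB)
    rcases hIBtot a b hne with h | h
    · exact hnot h
    · exact hOBasym a b hOB
        (hOBsub _ _ (Relation.TransGen.single (Or.inr ⟨hbI, h⟩)))
  · intro a b haI hIB
    exact hOBsub _ _ (Relation.TransGen.single (Or.inr ⟨haI, hIB⟩))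
end

section
/- Let α be a type, Inst ⊆ α a set, and let ib and ob be irreflexive transitive binary relations on α with (ob;[Inst]) ⊆ ib and ([Inst];ib) ⊆ ob. Suppose there exist a ≠ b in α with ¬ib a b and ¬ib b a. Define ib' as the transitive closure of ib ∪ {(a,b)} and ob' as the transitive closure of ob ∪ ([Inst];ib'). Then ib' and ob' are irreflexive and transitive, ib is strictly contained in ib', ob ⊆ ob', (ob';[Inst]) ⊆ ib', and ([Inst];ib') ⊆ ob'. (The single-step extension used in the proof of the joint order-extension theorem for issued-before and observed-before.) -/
/-- The single-step extension used in the proof of the joint order-extension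
theorem (`extend-ibob`) for the issued-before (`ib`) and observed-before (`ob`)
relations: adding an unordered pair `(a,b)` to `ib` and closing up yields
relations `ib'` and `ob'` that are irreflexive, transitive, strictly extend
`ib`, extend `ob`, and satisfy the closure laws with respect to `Inst`. -/
theorem extend_ibob_step {α : Type*} (Inst : Set α) (ib ob : α → α → Prop)
    (hib_irr : Irreflexive ib) (hib_trans : Transitive ib)
    (hob_irr : Irreflexive ob) (hob_trans : Transitive ob)
    (h_ob_inst : ∀ x y, ob x y → y ∈ Inst → ib x y)
    (h_inst_ib : ∀ x y, x ∈ Inst → ib x y → ob x y)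
    (a b : α) (hab : a ≠ b) (hnab : ¬ ib a b) (hnba : ¬ ib b a)
    (ib' ob' : α → α → Prop)
    (hib' : ib' = Relation.TransGen (fun u v => ib u v ∨ (u = a ∧ v = b)))
    (hob' : ob' = Relation.TransGen (fun u v => ob u v ∨ (u ∈ Inst ∧ ib' u v))) :
    Irreflexive ib' ∧ Transitive ib' ∧
    Irreflexive ob' ∧ Transitive ob' ∧
    (∀ x y, ib x y → ib' x y) ∧ (∃ x y, ib' x y ∧ ¬ ib x y) ∧
    (∀ x y, ob x y → ob' x y) ∧
    (∀ x y, ob' x y → y ∈ Inst → ib' x y) ∧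
    (∀ x y, x ∈ Inst → ib' x y → ob' x y) := by
  have hib'_trans : Transitive ib' := by
    subst hib'; exact fun _ _ _ h1 h2 => h1.trans h2
  have hib_sub : ∀ x y, ib x y → ib' x y := by
    subst hib'; exact fun x y h => Relation.TransGen.single (Or.inl h)
  have hib'_ab : ib' a b := by
    subst hib'; exact Relation.TransGen.single (Or.inr ⟨rfl, rfl⟩)
  -- decomposition of ib'
  have hib'_dec : ∀ x y, ib' x y →
      ib x y ∨ ((x = a ∨ ib x a) ∧ (y = b ∨ ib b y)) := by
    subst hib'
    intro x y h
    induction h with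
    | single h =>
        rcases h with h | ⟨rfl, rfl⟩
        · exact Or.inl h
        · exact Or.inr ⟨Or.inl rfl, Or.inl rfl⟩
    | tail _ hstep ih =>
        rename_i y w _
        rcases hstep with hyw | ⟨rfl, rfl⟩
        · rcases ih with h | ⟨h1, h2⟩
          · exact Or.inl (hib_trans h hyw)
          · refine Or.inr ⟨h1, ?_⟩
            rcases h2 with rfl | h2
            · exact Or.inr hyw
            · exact Or.inr (hib_trans h2 hyw)
        · rcases ih with h | ⟨h1, h2⟩
          · exact Or.inr ⟨Or.inr h, Or.inl rfl⟩
          · rcases h2 with rfl | h2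
            · exact absurd rfl hab
            · exact absurd h2 hnba
  have hib'_irr : Irreflexive ib' := by
    intro x hx
    rcases hib'_dec x x hx with h | ⟨h1, h2⟩
    · exact hib_irr x h
    · rcases h1 with rfl | h1 <;> rcases h2 with h2 | h2
      · exact hab h2
      · exact hnba h2
      · subst h2; exact hnba h1
      · exact hnba (hib_trans h2 h1)
  have hob'_trans : Transitive ob' := by
    subst hob'; exact fun _ _ _ h1 h2 => h1.trans h2
  have hob_sub : ∀ x y, ob x y → ob' x y := by
    subst hob'; exact fun x y h => Relation.TransGen.single (Or.inl h)
  have h_inst_sub : ∀ x y, x ∈ Inst → ib' x y → ob' x y := by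
    subst hob'; exact fun x y h1 h2 => Relation.TransGen.single (Or.inr ⟨h1, h2⟩)
  -- lift h_ob_inst to ib'
  have h_ob_inst' : ∀ x y, ob x y → y ∈ Inst → ib' x y :=
    fun x y h hy => hib_sub x y (h_ob_inst x y h hy)
  -- decomposition of ob'
  have hob'_dec : ∀ x y, ob' x y → ob x y ∨
      (∃ u, (x = u ∨ ob x u) ∧ u ∈ Inst ∧ ib' u y) ∨
      (∃ u v, (x = u ∨ ob x u) ∧ u ∈ Inst ∧ ib' u v ∧ ob v y) := by
    subst hob'
    intro x y h
    induction h with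
    | single h =>
        rcases h with h | ⟨h1, h2⟩
        · exact Or.inl h
        · exact Or.inr (Or.inl ⟨x, Or.inl rfl, h1, h2⟩)
    | tail _ hstep ih =>
        rename_i y w _
        rcases hstep with hyw | ⟨hy, hyw⟩
        · -- step is ob y w
          rcases ih with h | ⟨u, h1, h2, h3⟩ | ⟨u, v, h1, h2, h3, h4⟩
          · exact Or.inl (hob_trans h hyw)
          · exact Or.inr (Or.inr ⟨u, y, h1, h2, h3, hyw⟩)
          · exact Or.inr (Or.inr ⟨u, v, h1, h2, h3, hob_trans h4 hyw⟩)
        · -- step is y ∈ Inst ∧ ib' y w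
          rcases ih with h | ⟨u, h1, h2, h3⟩ | ⟨u, v, h1, h2, h3, h4⟩
          · exact Or.inr (Or.inl ⟨y, Or.inr h, hy, hyw⟩)
          · exact Or.inr (Or.inl ⟨u, h1, h2, hib'_trans h3 hyw⟩)
          · exact Or.inr (Or.inl ⟨u, h1, h2,
              hib'_trans h3 (hib'_trans (h_ob_inst' v y h4 hy) hyw)⟩)
  have hob'_irr : Irreflexive ob' := by
    intro x hx
    rcases hob'_dec x x hx with h | ⟨u, h1, h2, h3⟩ | ⟨u, v, h1, h2, h3, h4⟩
    · exact hob_irr x h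
    · rcases h1 with rfl | h1
      · exact hib'_irr x h3
      · exact hib'_irr x (hib'_trans (h_ob_inst' x u h1 h2) h3)
    · rcases h1 with rfl | h1
      · exact hib'_irr x (hib'_trans h3 (h_ob_inst' v x h4 h2))
      · exact hib'_irr u (hib'_trans h3 (h_ob_inst' v u (hob_trans h4 h1) h2))
  have hob'_inst : ∀ x y, ob' x y → y ∈ Inst → ib' x y := by
    intro x y h hy
    rcases hob'_dec x y h with h | ⟨u, h1, h2, h3⟩ | ⟨u, v, h1, h2, h3, h4⟩
    · exact h_ob_inst' x y h hy
    · rcases h1 with rfl | h1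
      · exact h3
      · exact hib'_trans (h_ob_inst' x u h1 h2) h3
    · have h5 : ib' u y := hib'_trans h3 (h_ob_inst' v y h4 hy)
      rcases h1 with rfl | h1
      · exact h5
      · exact hib'_trans (h_ob_inst' x u h1 h2) h5
  exact ⟨hib'_irr, hib'_trans, hob'_irr, hob'_trans, hib_sub,
    ⟨a, b, hib'_ab, hnab⟩, hob_sub, hob'_inst, h_inst_sub⟩
end

section
/- Let α be a type, Inst ⊆ α a set, and let ib and ob be irreflexive transitive binary relations on α with (ob;[Inst]) ⊆ ib and ([Inst];ib) ⊆ ob. Suppose a ≠ b with ¬ib a b and ¬ib b a, and define ib' as the transitive closure of ib ∪ {(a,b)} and ob' as the transitive closure of ob ∪ ([Inst];ib'). Then ob' is irreflexive. -/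
/-- In the single-step extension of the proof of Theorem `extend-ibob`, the
extended observed-before relation `ob'` is still irreflexive. -/
theorem extend_ibob_step_ob_irreflexive {α : Type*} (Inst : Set α)
    (ib ob : α → α → Prop)
    (hib_irr : Irreflexive ib) (hib_trans : Transitive ib)
    (hob_irr : Irreflexive ob) (hob_trans : Transitive ob)
    (h_ob_inst : ∀ x y, ob x y → y ∈ Inst → ib x y)
    (h_inst_ib : ∀ x y, x ∈ Inst → ib x y → ob x y)
    (a b : α) (hab : a ≠ b) (hnab : ¬ ib a b) (hnba : ¬ ib b a)
    (ib' ob' : α → α → Prop)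
    (hib' : ib' = Relation.TransGen (fun u v => ib u v ∨ (u = a ∧ v = b)))
    (hob' : ob' = Relation.TransGen (fun u v => ob u v ∨ (u ∈ Inst ∧ ib' u v))) :
    Irreflexive ob' := by
  subst hib' hob'
  have comp : ∀ {u v w : α}, (u = v ∨ ib u v) → (v = w ∨ ib v w) → (u = w ∨ ib u w) := by
    rintro u v w (rfl | h1) (rfl | h2)
    · exact Or.inl rfl
    · exact Or.inr h2
    · exact Or.inr h1
    · exact Or.inr (hib_trans h1 h2)
  have ba_false : ∀ {u : α}, (b = u ∨ ib b u) → (u = a ∨ ib u a) → False := by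
    intro u h1 h2
    rcases comp h1 h2 with rfl | h
    · exact hab rfl
    · exact hnba h
  have hchar : ∀ x y, Relation.TransGen (fun u v => ib u v ∨ (u = a ∧ v = b)) x y →
      ib x y ∨ ((x = a ∨ ib x a) ∧ (b = y ∨ ib b y)) := by
    intro x y h
    induction h with
    | single h =>
      rcases h with h | ⟨rfl, rfl⟩
      · exact Or.inl h
      · exact Or.inr ⟨Or.inl rfl, Or.inl rfl⟩
    | tail h₁ h₂ ih =>
      rcases ih with hxz | ⟨hxa, hbz⟩
      · rcases h₂ with h | ⟨rfl, rfl⟩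
        · exact Or.inl (hib_trans hxz h)
        · exact Or.inr ⟨Or.inr hxz, Or.inl rfl⟩
      · rcases h₂ with h | ⟨rfl, rfl⟩
        · refine Or.inr ⟨hxa, ?_⟩
          rcases hbz with rfl | hbz
          · exact Or.inr h
          · exact Or.inr (hib_trans hbz h)
        · exact (ba_false hbz (Or.inl rfl)).elim
  have compo : ∀ {u v w : α}, (u = v ∨ ob u v) → (v = w ∨ ob v w) → (u = w ∨ ob u w) := by
    rintro u v w (rfl | h1) (rfl | h2)
    · exact Or.inl rfl
    · exact Or.inr h2
    · exact Or.inr h1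
    · exact Or.inr (hob_trans h1 h2)
  have hochar : ∀ x y,
      Relation.TransGen (fun u v => ob u v ∨
        (u ∈ Inst ∧ Relation.TransGen (fun u v => ib u v ∨ (u = a ∧ v = b)) u v)) x y →
      ob x y ∨ ∃ p q, (x = p ∨ ob x p) ∧ p ∈ Inst ∧ (p = a ∨ ib p a) ∧
        (b = q ∨ ib b q) ∧ (q = y ∨ ob q y) := by
    intro x y h
    induction h with
    | single h =>
      rcases h with h | ⟨hx, hib'⟩
      · exact Or.inl h
      · rcases hchar _ _ hib' with h | ⟨hxa, hby⟩
        · exact Or.inl (h_inst_ib _ _ hx h)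
        · exact Or.inr ⟨_, _, Or.inl rfl, hx, hxa, hby, Or.inl rfl⟩
    | tail h₁ h₂ ih =>
      rcases ih with hxz | ⟨p, q, hxp, hp, hpa, hbq, hqz⟩
      · rcases h₂ with h | ⟨hz, hib'⟩
        · exact Or.inl (hob_trans hxz h)
        · rcases hchar _ _ hib' with h | ⟨hza, hby⟩
          · exact Or.inl (hob_trans hxz (h_inst_ib _ _ hz h))
          · exact Or.inr ⟨_, _, Or.inr hxz, hz, hza, hby, Or.inl rfl⟩
      · rcases h₂ with h | ⟨hz, hib'⟩
        · exact Or.inr ⟨p, q, hxp, hp, hpa, hbq, compo hqz (Or.inr h)⟩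
        · rcases hchar _ _ hib' with h | ⟨hza, hby⟩
          · exact Or.inr ⟨p, q, hxp, hp, hpa, hbq,
              compo hqz (Or.inr (h_inst_ib _ _ hz h))⟩
          · -- second crossing: derive False
            exfalso
            rcases hqz with rfl | h
            · exact ba_false hbq hza
            · exact ba_false (comp hbq (Or.inr (h_ob_inst _ _ h hz))) hza
  intro x hx
  rcases hochar x x hx with h | ⟨p, q, hxp, hp, hpa, hbq, hqx⟩
  · exact hob_irr x h
  · have hqp : q = p ∨ ib q p := by
      rcases compo hqx hxp with rfl | h
      · exact Or.inl rfl
      · exact Or.inr (h_ob_inst _ _ h hp)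
    exact ba_false (comp hbq hqp) hpa
end

section
/- Let α be a type, Inst ⊆ α a set, and let ib and ob be irreflexive transitive binary relations on α with (ob;[Inst]) ⊆ ib and ([Inst];ib) ⊆ ob. Suppose a ≠ b with ¬ib a b and ¬ib b a, and define ib' as the transitive closure of ib ∪ {(a,b)} and ob' as the transitive closure of ob ∪ ([Inst];ib'). Then (ob';[Inst]) ⊆ ib'. -/
/-- In the single-step extension of the proof of Theorem `extend-ibob`, the
extended relations satisfy `(ob' ; [Inst]) ⊆ ib'`. -/
theorem extend_ibob_step_ob_inst_sub_ib {α : Type*} (Inst : Set α)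
    (ib ob : α → α → Prop)
    (hib_irr : Irreflexive ib) (hib_trans : Transitive ib)
    (hob_irr : Irreflexive ob) (hob_trans : Transitive ob)
    (h_ob_inst : ∀ x y, ob x y → y ∈ Inst → ib x y)
    (h_inst_ib : ∀ x y, x ∈ Inst → ib x y → ob x y)
    (a b : α) (hab : a ≠ b) (hnab : ¬ ib a b) (hnba : ¬ ib b a)
    (ib' ob' : α → α → Prop)
    (hib' : ib' = Relation.TransGen (fun u v => ib u v ∨ (u = a ∧ v = b)))
    (hob' : ob' = Relation.TransGen (fun u v => ob u v ∨ (u ∈ Inst ∧ ib' u v))) :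
    ∀ x y, ob' x y → y ∈ Inst → ib' x y := by
  have ib'_trans : ∀ {u v w}, ib' u v → ib' v w → ib' u w := by
    subst hib'; exact fun h1 h2 => Relation.TransGen.trans h1 h2
  have ib_sub : ∀ u v, ib u v → ib' u v := by
    subst hib'; exact fun u v h => Relation.TransGen.single (Or.inl h)
  have main : ∀ x y, ob' x y →
      ob x y ∨ ∃ c d, (x = c ∨ ob x c) ∧ c ∈ Inst ∧ ib' c d ∧ (d = y ∨ ob d y) := by
    intro x y h
    rw [hob'] at h
    induction h with
    | single h =>
      rcases h with h | ⟨hx, hxy⟩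
      · exact Or.inl h
      · exact Or.inr ⟨x, _, Or.inl rfl, hx, hxy, Or.inl rfl⟩
    | @tail m y hxm hmy ih =>
      rcases hmy with hmy | ⟨hm, hmy'⟩
      · rcases ih with h | ⟨c, d, h1, hc, hcd, h2⟩
        · exact Or.inl (hob_trans h hmy)
        · refine Or.inr ⟨c, d, h1, hc, hcd, Or.inr ?_⟩
          rcases h2 with rfl | h2
          · exact hmy
          · exact hob_trans h2 hmy
      · rcases ih with h | ⟨c, d, h1, hc, hcd, h2⟩
        · exact Or.inr ⟨m, y, Or.inr h, hm, hmy', Or.inl rfl⟩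
        · have hdy : ib' d y := by
            rcases h2 with rfl | h2
            · exact hmy'
            · exact ib'_trans (ib_sub _ _ (h_ob_inst d m h2 hm)) hmy'
          exact Or.inr ⟨c, y, h1, hc, ib'_trans hcd hdy, Or.inl rfl⟩
  intro x y hxy hy
  rcases main x y hxy with h | ⟨c, d, h1, hc, hcd, h2⟩
  · exact ib_sub _ _ (h_ob_inst x y h hy)
  · have hcy : ib' c y := by
      rcases h2 with rfl | h2
      · exact hcd
      · exact ib'_trans hcd (ib_sub _ _ (h_ob_inst d y h2 hy))
    rcases h1 with rfl | h1
    · exact hcy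
    · exact ib'_trans (ib_sub _ _ (h_ob_inst x c h1 hc)) hcy
end

section
/- Let α be a type, Inst ⊆ α a set, let ib be an irreflexive, transitive, and total binary relation on α (for all a ≠ b, ib a b or ib b a), and let ob be an irreflexive transitive relation with (ob;[Inst]) ⊆ ib and ([Inst];ib) ⊆ ob. Suppose a ≠ b with ¬ob a b and ¬ob b a, and define ob' as the transitive closure of ob ∪ {(a,b)}. Then ob' is irreflexive and transitive, ob is strictly contained in ob', (ob';[Inst]) ⊆ ib, and ([Inst];ib) ⊆ ob'. (Once the issued-before relation is total, the observed-before relation can be freely extended to a total relation while preserving the closure laws.) -/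
/-- Once the issued-before relation `ib` is total, the observed-before relation
`ob` can be freely extended by an unordered pair `(a,b)` into `ob'`, which is
irreflexive, transitive, strictly extends `ob`, and still satisfies the closure
laws with respect to `Inst`. -/
theorem extend_ob_step {α : Type*} (Inst : Set α) (ib ob : α → α → Prop)
    (hib_irr : Irreflexive ib) (hib_trans : Transitive ib)
    (hib_total : ∀ x y, x ≠ y → ib x y ∨ ib y x)
    (hob_irr : Irreflexive ob) (hob_trans : Transitive ob)
    (h_ob_inst : ∀ x y, ob x y → y ∈ Inst → ib x y)
    (h_inst_ib : ∀ x y, x ∈ Inst → ib x y → ob x y)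
    (a b : α) (hab : a ≠ b) (hnab : ¬ ob a b) (hnba : ¬ ob b a)
    (ob' : α → α → Prop)
    (hob' : ob' = Relation.TransGen (fun u v => ob u v ∨ (u = a ∧ v = b))) :
    Irreflexive ob' ∧ Transitive ob' ∧
    (∀ x y, ob x y → ob' x y) ∧ (∃ x y, ob' x y ∧ ¬ ob x y) ∧
    (∀ x y, ob' x y → y ∈ Inst → ib x y) ∧
    (∀ x y, x ∈ Inst → ib x y → ob' x y) := by
  subst hob'
  set base := fun u v => ob u v ∨ (u = a ∧ v = b) with hbase
  -- characterization relation
  set r := fun x y => ob x y ∨ ((x = a ∨ ob x a) ∧ (y = b ∨ ob b y)) with hr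
  have hrstep : ∀ x y z, r x y → base y z → r x z := by
    intro x y z hxy hyz
    rcases hxy with h1 | ⟨h1a, h1b⟩
    · rcases hyz with h2 | ⟨rfl, rfl⟩
      · exact Or.inl (hob_trans h1 h2)
      · exact Or.inr ⟨Or.inr h1, Or.inl rfl⟩
    · rcases hyz with h2 | ⟨rfl, rfl⟩
      · refine Or.inr ⟨h1a, Or.inr ?_⟩
        rcases h1b with rfl | hb
        · exact h2
        · exact hob_trans hb h2
      · exact Or.inr ⟨h1a, Or.inl rfl⟩
  have hchar : ∀ x y, Relation.TransGen base x y → r x y := by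
    intro x y h
    induction h with
    | single h => rcases h with h | ⟨rfl, rfl⟩
                  · exact Or.inl h
                  · exact Or.inr ⟨Or.inl rfl, Or.inl rfl⟩
    | tail _ h2 ih => exact hrstep _ _ _ ih h2
  have hnirr : ∀ x, ¬ r x x := by
    intro x hx
    rcases hx with h | ⟨h1, h2⟩
    · exact hob_irr x h
    · rcases h1 with h1 | h1 <;> rcases h2 with h2 | h2
      · exact hab (h1.symm.trans h2)
      · exact hnba (h1 ▸ h2)
      · exact hnba (h2 ▸ h1)
      · exact hnba (hob_trans h2 h1)
  refine ⟨?_, ?_, ?_, ?_, ?_, ?_⟩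
  · intro x hx
    exact hnirr x (hchar x x hx)
  · exact fun _ _ _ h1 h2 => h1.trans h2
  · intro x y h
    exact Relation.TransGen.single (Or.inl h)
  · exact ⟨a, b, Relation.TransGen.single (Or.inr ⟨rfl, rfl⟩), hnab⟩
  · intro x y h hy
    rcases hchar x y h with h | ⟨h1, h2⟩
    · exact h_ob_inst _ _ h hy
    · rcases h2 with h2 | h2
      · -- y = b ∈ Inst
        rw [h2] at hy ⊢
        have hxb : x ≠ b := by
          intro h
          rcases h1 with h1 | h1
          · exact hab (h1.symm.trans h)
          · exact hnba (h ▸ h1)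
        rcases hib_total x b hxb with hib | hib
        · exact hib
        · exfalso
          have hbx := h_inst_ib _ _ hy hib
          rcases h1 with h1 | h1
          · exact hnba (h1 ▸ hbx)
          · exact hnba (hob_trans hbx h1)
      · -- ob b y, y ∈ Inst
        have hxy : x ≠ y := by
          intro h
          rcases h1 with h1 | h1
          · exact hnba (h1 ▸ h ▸ h2)
          · exact hnba (hob_trans (h ▸ h2) h1)
        rcases hib_total x y hxy with hib | hib
        · exact hib
        · exfalso
          have hyx := h_inst_ib _ _ hy hib
          rcases h1 with h1 | h1
          · exact hnba (h1 ▸ hob_trans h2 hyx)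
          · exact hnba (hob_trans h2 (hob_trans hyx h1))
  · intro x y hx hib
    exact Relation.TransGen.single (Or.inl (h_inst_ib _ _ hx hib))
end

section
/- Let r and s be binary relations on a type α that are both transitive and irreflexive. If the transitive closure of the composition r;s is irreflexive, then the transitive closure of the union r ∪ s is irreflexive. (A cycle in the union of two transitive irreflexive relations can only arise by alternating between the two components.) -/
/-- A cycle in the union of two transitive irreflexive relations can only arise
by alternating between the two components: if the transitive closure of the
composition `r ; s` is irreflexive, then the transitive closure of `r ∪ s` is
irreflexive. -/
theorem transGen_union_irreflexive_of_comp {α : Type*} (r s : α → α → Prop)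
    (hr_trans : Transitive r) (hr_irr : Irreflexive r)
    (hs_trans : Transitive s) (hs_irr : Irreflexive s)
    (h : Irreflexive (Relation.TransGen (fun x y => ∃ c, r x c ∧ s c y))) :
    Irreflexive (Relation.TransGen (fun x y => r x y ∨ s x y)) := by
  set t : α → α → Prop := fun x y => ∃ c, r x c ∧ s c y with ht
  -- postcompose t⁺ with s
  have tplus_s : ∀ a b d, Relation.TransGen t a b → s b d → Relation.TransGen t a d := by
    intro a b d htab hsb
    induction htab generalizing d with
    | single hab =>
      obtain ⟨e, hre, hse⟩ := hab
      exact Relation.TransGen.single ⟨e, hre, hs_trans hse hsb⟩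
    | tail _ hbc ih =>
      obtain ⟨e, hre, hse⟩ := hbc
      exact Relation.TransGen.tail ‹_› ⟨e, hre, hs_trans hse hsb⟩
  -- normal forms
  have key : ∀ a b, Relation.TransGen (fun x y => r x y ∨ s x y) a b →
      (r a b ∨ s a b ∨ (∃ c, s a c ∧ r c b) ∨ Relation.TransGen t a b ∨
        (∃ c, s a c ∧ Relation.TransGen t c b) ∨
        (∃ c, Relation.TransGen t a c ∧ r c b) ∨
        (∃ c d, s a c ∧ Relation.TransGen t c d ∧ r d b)) := by
    intro a b hab
    induction hab with
    | single hab =>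
      rcases hab with h1 | h1
      · exact Or.inl h1
      · exact Or.inr (Or.inl h1)
    | tail _ hbc ih =>
      rename_i b' c' _
      rcases hbc with hbc | hbc
      · -- append r
        rcases ih with h1 | h1 | ⟨e, h1, h2⟩ | h1 | ⟨e, h1, h2⟩ | ⟨e, h1, h2⟩ | ⟨e, f, h1, h2, h3⟩
        · exact Or.inl (hr_trans h1 hbc)
        · exact Or.inr (Or.inr (Or.inl ⟨b', h1, hbc⟩))
        · exact Or.inr (Or.inr (Or.inl ⟨e, h1, hr_trans h2 hbc⟩))
        · exact Or.inr (Or.inr (Or.inr (Or.inr (Or.inr (Or.inl ⟨b', h1, hbc⟩)))))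
        · exact Or.inr (Or.inr (Or.inr (Or.inr (Or.inr (Or.inr ⟨e, b', h1, h2, hbc⟩)))))
        · exact Or.inr (Or.inr (Or.inr (Or.inr (Or.inr (Or.inl ⟨e, h1, hr_trans h2 hbc⟩)))))
        · exact Or.inr (Or.inr (Or.inr (Or.inr (Or.inr (Or.inr ⟨e, f, h1, h2, hr_trans h3 hbc⟩)))))
      · -- append s
        rcases ih with h1 | h1 | ⟨e, h1, h2⟩ | h1 | ⟨e, h1, h2⟩ | ⟨e, h1, h2⟩ | ⟨e, f, h1, h2, h3⟩
        · exact Or.inr (Or.inr (Or.inr (Or.inl (Relation.TransGen.single ⟨b', h1, hbc⟩))))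
        · exact Or.inr (Or.inl (hs_trans h1 hbc))
        · exact Or.inr (Or.inr (Or.inr (Or.inr (Or.inl
            ⟨e, h1, Relation.TransGen.single ⟨b', h2, hbc⟩⟩))))
        · exact Or.inr (Or.inr (Or.inr (Or.inl (tplus_s _ _ _ h1 hbc))))
        · exact Or.inr (Or.inr (Or.inr (Or.inr (Or.inl ⟨e, h1, tplus_s _ _ _ h2 hbc⟩))))
        · exact Or.inr (Or.inr (Or.inr (Or.inl
            (Relation.TransGen.tail h1 ⟨b', h2, hbc⟩))))
        · exact Or.inr (Or.inr (Or.inr (Or.inr (Or.inl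
            ⟨e, h1, Relation.TransGen.tail h2 ⟨b', h3, hbc⟩⟩))))
  intro a haa
  rcases key a a haa with h1 | h1 | ⟨e, h1, h2⟩ | h1 | ⟨e, h1, h2⟩ | ⟨e, h1, h2⟩ | ⟨e, f, h1, h2, h3⟩
  · exact hr_irr a h1
  · exact hs_irr a h1
  · exact h e (Relation.TransGen.single ⟨a, h2, h1⟩)
  · exact h a h1
  · exact h e (tplus_s _ _ _ h2 h1)
  · -- t⁺ a e, r e a : rotate using head
    obtain ⟨f, ⟨g, hrg, hsg⟩, hrest⟩ := Relation.TransGen.head'_iff.mp h1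
    exact h e (Relation.TransGen.head' ⟨g, hr_trans h2 hrg, hsg⟩ hrest)
  · exact h e (Relation.TransGen.tail h2 ⟨a, h3, h1⟩)
end

section
/- Let α be a type, P ⊆ α a set, and let i₀ and o₀ be binary relations on α. Define sequences (i_n) and (o_n) by mutual recursion: i_{n+1} is the transitive closure of i_n ∪ (o_n;[P]) and o_{n+1} is the transitive closure of o_n ∪ ([P];i_n). If there exist transitive irreflexive relations I and O on α with i₀ ⊆ I, o₀ ⊆ O, (O;[P]) ⊆ I, and ([P];I) ⊆ O, then the limit relations ⋃_n i_n and ⋃_n o_n are irreflexive. -/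
/-- If the mutually recursive approximants of the issued-before and
observed-before relations can be embedded into transitive irreflexive relations
`I`, `O` satisfying the `[P]`-composition closure laws, then the limit relations
`⋃ n, i n` and `⋃ n, o n` are irreflexive. -/
theorem ib_ob_limit_irreflexive {α : Type*} (P : Set α) (i o : ℕ → α → α → Prop)
    (hi : ∀ n, i (n + 1) =
      Relation.TransGen (fun x y => i n x y ∨ (o n x y ∧ y ∈ P)))
    (ho : ∀ n, o (n + 1) =
      Relation.TransGen (fun x y => o n x y ∨ (x ∈ P ∧ i n x y)))
    (h : ∃ I O : α → α → Prop,
      Transitive I ∧ Irreflexive I ∧ Transitive O ∧ Irreflexive O ∧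
      (∀ x y, i 0 x y → I x y) ∧ (∀ x y, o 0 x y → O x y) ∧
      (∀ x y, O x y → y ∈ P → I x y) ∧
      (∀ x y, x ∈ P → I x y → O x y)) :
    Irreflexive (fun x y => ∃ n, i n x y) ∧
    Irreflexive (fun x y => ∃ n, o n x y) := by
  obtain ⟨I, O, hIt, hIir, hOt, hOir, hi0, ho0, hOP, hPI⟩ := h
  have tg : ∀ (r R : α → α → Prop), Transitive R → (∀ x y, r x y → R x y) →
      ∀ x y, Relation.TransGen r x y → R x y := by
    intro r R hR hrR x y hxy
    induction hxy with
    | single h' => exact hrR _ _ h'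
    | tail _ h' ih => exact hR ih (hrR _ _ h')
  have key : ∀ n, (∀ x y, i n x y → I x y) ∧ (∀ x y, o n x y → O x y) := by
    intro n
    induction n with
    | zero => exact ⟨hi0, ho0⟩
    | succ n ih =>
      obtain ⟨ihI, ihO⟩ := ih
      constructor
      · intro x y hxy
        rw [hi n] at hxy
        refine tg _ I hIt (fun a b hab => ?_) x y hxy
        rcases hab with h' | ⟨h', hP⟩
        · exact ihI _ _ h'
        · exact hOP _ _ (ihO _ _ h') hP
      · intro x y hxy
        rw [ho n] at hxy
        refine tg _ O hOt (fun a b hab => ?_) x y hxy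
        rcases hab with h' | ⟨hP, h'⟩
        · exact ihO _ _ h'
        · exact hPI _ _ hP (ihI _ _ h')
  exact ⟨fun x ⟨n, hx⟩ => hIir x ((key n).1 _ _ hx),
         fun x ⟨n, hx⟩ => hOir x ((key n).2 _ _ hx)⟩
end

section
/- Let α be a type, P ⊆ α a set, and let i₀ and o₀ be binary relations on α. Define sequences (i_n) and (o_n) by mutual recursion: i_{n+1} is the transitive closure of i_n ∪ (o_n;[P]) and o_{n+1} is the transitive closure of o_n ∪ ([P];i_n). Then the sequences are monotone (i_n ⊆ i_{n+1} and o_n ⊆ o_{n+1} for all n), and the limits i∞ = ⋃_n i_n and o∞ = ⋃_n o_n satisfy the mutual fixpoint equations: i∞ equals the transitive closure of i∞ ∪ (o∞;[P]), and o∞ equals the transitive closure of o∞ ∪ ([P];i∞). -/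
/-- The mutually recursive approximants of the issued-before and observed-before
relations are monotone, and their limits satisfy the mutual fixpoint equations
of the RDMA^TSO_RMW consistency definition. -/
theorem ib_ob_limit_fixpoint {α : Type*} (P : Set α) (i o : ℕ → α → α → Prop)
    (hi : ∀ n, i (n + 1) =
      Relation.TransGen (fun x y => i n x y ∨ (o n x y ∧ y ∈ P)))
    (ho : ∀ n, o (n + 1) =
      Relation.TransGen (fun x y => o n x y ∨ (x ∈ P ∧ i n x y))) :
    (∀ n x y, i n x y → i (n + 1) x y) ∧
    (∀ n x y, o n x y → o (n + 1) x y) ∧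
    (∀ x y, (∃ n, i n x y) ↔
      Relation.TransGen
        (fun u v => (∃ n, i n u v) ∨ ((∃ n, o n u v) ∧ v ∈ P)) x y) ∧
    (∀ x y, (∃ n, o n x y) ↔
      Relation.TransGen
        (fun u v => (∃ n, o n u v) ∨ (u ∈ P ∧ ∃ n, i n u v)) x y) := by
  have imono : ∀ n x y, i n x y → i (n + 1) x y := fun n x y h => by
    rw [hi n]; exact Relation.TransGen.single (Or.inl h)
  have omono : ∀ n x y, o n x y → o (n + 1) x y := fun n x y h => by
    rw [ho n]; exact Relation.TransGen.single (Or.inl h)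
  have ile : ∀ {m n}, m ≤ n → ∀ x y, i m x y → i n x y := by
    intro m n h
    induction n, h using Nat.le_induction with
    | base => exact fun x y h => h
    | succ n _ ih => exact fun x y h => imono n x y (ih x y h)
  have ole : ∀ {m n}, m ≤ n → ∀ x y, o m x y → o n x y := by
    intro m n h
    induction n, h using Nat.le_induction with
    | base => exact fun x y h => h
    | succ n _ ih => exact fun x y h => omono n x y (ih x y h)
  refine ⟨imono, omono, ?_, ?_⟩
  · intro x y
    constructor
    · rintro ⟨n, h⟩
      exact Relation.TransGen.single (Or.inl ⟨n, h⟩)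
    · intro h
      induction h with
      | single h =>
        rcases h with ⟨n, h⟩ | ⟨⟨n, h⟩, hp⟩
        · exact ⟨n, h⟩
        · exact ⟨n + 1, by rw [hi n]; exact Relation.TransGen.single (Or.inr ⟨h, hp⟩)⟩
      | tail _ h ih =>
        rcases ih with ⟨m, hm⟩
        rcases h with ⟨n, h⟩ | ⟨⟨n, h⟩, hp⟩
        · refine ⟨max m n + 1, ?_⟩
          rw [hi (max m n)]
          refine Relation.TransGen.tail (Relation.TransGen.single
            (show i (max m n) x _ ∨ _ from
              Or.inl (ile (le_max_left m n) _ _ hm))) ?_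
          exact Or.inl (ile (le_max_right m n) _ _ h)
        · refine ⟨max m n + 1, ?_⟩
          rw [hi (max m n)]
          refine Relation.TransGen.tail (Relation.TransGen.single
            (show i (max m n) x _ ∨ _ from
              Or.inl (ile (le_max_left m n) _ _ hm))) ?_
          exact Or.inr ⟨ole (le_max_right m n) _ _ h, hp⟩
  · intro x y
    constructor
    · rintro ⟨n, h⟩
      exact Relation.TransGen.single (Or.inl ⟨n, h⟩)
    · intro h
      induction h with
      | single h =>
        rcases h with ⟨n, h⟩ | ⟨hp, ⟨n, h⟩⟩
        · exact ⟨n, h⟩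
        · exact ⟨n + 1, by rw [ho n]; exact Relation.TransGen.single (Or.inr ⟨hp, h⟩)⟩
      | tail _ h ih =>
        rcases ih with ⟨m, hm⟩
        rcases h with ⟨n, h⟩ | ⟨hp, ⟨n, h⟩⟩
        · refine ⟨max m n + 1, ?_⟩
          rw [ho (max m n)]
          refine Relation.TransGen.tail (Relation.TransGen.single
            (show o (max m n) x _ ∨ _ from
              Or.inl (ole (le_max_left m n) _ _ hm))) ?_
          exact Or.inl (ole (le_max_right m n) _ _ h)
        · refine ⟨max m n + 1, ?_⟩
          rw [ho (max m n)]
          refine Relation.TransGen.tail (Relation.TransGen.single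
            (show o (max m n) x _ ∨ _ from
              Or.inl (ole (le_max_left m n) _ _ hm))) ?_
          exact Or.inr ⟨hp, ile (le_max_right m n) _ _ h⟩
end
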